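/- (Existence Lemma.) Let Γ₀ be a maximally Log-consistent set, M^c the canonical model for Γ₀, Δ ∈ [Γ₀]_⊞, and φ ∈ L_CPL. If ¬Iφ ∈ Δ, then either I φ̄ ∉ Δ, or there exists Γ ∈ [Γ₀]_⊞ such that Δ R^c Γ and ¬φ ∈ Γ. -/

import Mathlib

/-- Formulas of classical propositional logic `L_CPL` over a countable set
of atomic propositions (represented by natural numbers). -/
inductive CPL : Type
  | top : CPL
  | atom : ℕ → CPL
  | neg : CPL → CPL
  | or : CPL → CPL → CPL
  | and : CPL → CPL → CPL
  deriving DecidableEq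
/-- `Var(φ)`: the (finite) set of atomic propositions occurring in `φ`. -/
def CPL.var : CPL → Finset ℕ
  | .top => ∅
  | .atom p => {p}
  | .neg φ => φ.var
  | .or φ ψ => φ.var ∪ ψ.var
  | .and φ ψ => φ.var ∪ ψ.var

/-- `p̄ := p ∨ ¬p`. -/
def pbar (p : ℕ) : CPL := .or (.atom p) (.neg (.atom p))

/-- Conjunction of a list of `L_CPL` formulas (empty conjunction is `⊤`). -/
def conjList : List CPL → CPL
  | [] => .top
  | [α] => α
  | α :: β :: rest => .and α (conjList (β :: rest))

/-- `φ̄ := ⋀_{p ∈ Var(φ)} (p ∨ ¬p)`, with the conjuncts taken in the fixed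
(increasing) enumeration order of the atomic propositions. -/
def CPL.bar (φ : CPL) : CPL := conjList ((φ.var.sort (· ≤ ·)).map pbar)
/-- Formulas of the language `L_Int`, extending `L_CPL` (embedded via `of`) by
negation, disjunction, conjunction, the global modality `⊞` (`box`) and the
intention modality `I` (`int`), which applies only to `L_CPL` formulas. -/
inductive Form : Type
  | of : CPL → Form
  | neg : Form → Form
  | or : Form → Form → Form
  | and : Form → Form → Form
  | box : Form → Form
  | int : CPL → Form
  deriving DecidableEq
/-- Material implication in `L_Int`: `φ → ψ := ¬φ ∨ ψ`. -/
def Form.imp (φ ψ : Form) : Form := .or (.neg φ) ψ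

/-- Material biconditional in `L_Int`: `φ ↔ ψ := (φ → ψ) ∧ (ψ → φ)`. -/
def Form.iff (φ ψ : Form) : Form := .and (φ.imp ψ) (ψ.imp φ)

/-- `⊥ := ¬⊤`. -/
def Form.bot : Form := .neg (.of .top)

/-- Boolean evaluation of `L_CPL` formulas under a valuation of the atoms. -/
def CPL.eval (v : ℕ → Bool) : CPL → Bool
  | .top => true
  | .atom p => v p
  | .neg φ => !φ.eval v
  | .or φ ψ => φ.eval v || ψ.eval v
  | .and φ ψ => φ.eval v && ψ.eval v

/-- Boolean evaluation of `L_Int` formulas, treating `⊞`- and `I`-formulas as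
atoms (evaluated by `u`). -/
def Form.eval (v : ℕ → Bool) (u : Form → Bool) : Form → Bool
  | .of α => α.eval v
  | .neg φ => !φ.eval v u
  | .or φ ψ => φ.eval v u || ψ.eval v u
  | .and φ ψ => φ.eval v u && ψ.eval v u
  | .box φ => u (.box φ)
  | .int α => u (.int α)

/-- Classical propositional tautologies of `L_Int` (with modal formulas
treated as atoms). -/
def Taut (φ : Form) : Prop := ∀ v u, φ.eval v u = true

/-- Derivability in the proof system `Log`: classical tautologies and Modus
Ponens; `S5` axioms and necessitation for `⊞`; and the intention axioms
Ax1: `I⊤`; Ax2: `Iφ → Iφ̄`; Ax3: `Iφ → ¬I¬φ`; Ax4: `(Iφ ∧ Iψ) ↔ I(φ ∧ ψ)`;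
Ax5: `⊞(ψ → φ) → ((Iψ ∧ Iφ̄) → Iφ)`. -/
inductive Deriv : Set Form → Form → Prop
  | prem {Γ : Set Form} {φ : Form} : φ ∈ Γ → Deriv Γ φ
  | taut {Γ : Set Form} {φ : Form} : Taut φ → Deriv Γ φ
  | mp {Γ : Set Form} {φ ψ : Form} :
      Deriv Γ (φ.imp ψ) → Deriv Γ φ → Deriv Γ ψ
  | boxK {Γ : Set Form} (φ ψ : Form) :
      Deriv Γ ((Form.box (φ.imp ψ)).imp ((Form.box φ).imp (Form.box ψ)))
  | boxT {Γ : Set Form} (φ : Form) : Deriv Γ ((Form.box φ).imp φ)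
  | box5 {Γ : Set Form} (φ : Form) :
      Deriv Γ ((Form.neg (Form.box φ)).imp (Form.box (Form.neg (Form.box φ))))
  | nec {Γ : Set Form} {φ : Form} : Deriv ∅ φ → Deriv Γ (Form.box φ)
  | ax1 {Γ : Set Form} : Deriv Γ (Form.int .top)
  | ax2 {Γ : Set Form} (α : CPL) :
      Deriv Γ ((Form.int α).imp (Form.int α.bar))
  | ax3 {Γ : Set Form} (α : CPL) :
      Deriv Γ ((Form.int α).imp (Form.neg (Form.int (CPL.neg α))))
  | ax4 {Γ : Set Form} (α β : CPL) :
      Deriv Γ ((Form.and (.int α) (.int β)).iff (Form.int (.and α β)))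
  | ax5 {Γ : Set Form} (α β : CPL) :
      Deriv Γ ((Form.box ((Form.of β).imp (Form.of α))).imp
        ((Form.and (.int β) (.int α.bar)).imp (Form.int α)))

/-- A set of formulas is `Log`-consistent if `⊥` is not derivable from it. -/
def LogConsistent (Γ : Set Form) : Prop := ¬ Deriv Γ Form.bot

/-- A maximally `Log`-consistent set: consistent with no proper consistent
extension. -/
def MCS (Γ : Set Form) : Prop :=
  LogConsistent Γ ∧ ∀ Δ, LogConsistent Δ → Γ ⊆ Δ → Δ = Γ
/-- `Γ[⊞] = {φ : ⊞φ ∈ Γ}`. -/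
def boxSet (Γ : Set Form) : Set Form := {φ | Form.box φ ∈ Γ}

/-- `Γ[I] = {φ ∈ L_Int : Iψ ∧ ⊞(ψ → φ) ∈ Γ for some ψ ∈ L_CPL}`. -/
def intSet (Γ : Set Form) : Set Form :=
  {φ | ∃ ψ : CPL, Form.and (Form.int ψ) (Form.box ((Form.of ψ).imp φ)) ∈ Γ}
/-- `[Γ₀]_⊞`: the `∼⊞`-equivalence class of `Γ₀`, i.e. the maximally
`Log`-consistent sets `Δ` with `Γ₀[⊞] ⊆ Δ`. -/
def canonDomain (Γ₀ : Set Form) : Set (Set Form) :=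
  {Δ | MCS Δ ∧ boxSet Γ₀ ⊆ Δ}

/-! ### Auxiliary machinery -/

section Aux

open Set

/-- Monotonicity of derivability. -/
lemma deriv_mono {Γ Γ' : Set Form} {φ : Form} (h : Deriv Γ φ) (hsub : Γ ⊆ Γ') :
    Deriv Γ' φ := by
  induction h with
  | prem h => exact .prem (hsub h)
  | taut h => exact .taut h
  | mp _ _ ih1 ih2 => exact .mp (ih1 hsub) (ih2 hsub)
  | boxK φ ψ => exact .boxK φ ψ
  | boxT φ => exact .boxT φ
  | box5 φ => exact .box5 φ
  | nec h => exact .nec h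
  | ax1 => exact .ax1
  | ax2 α => exact .ax2 α
  | ax3 α => exact .ax3 α
  | ax4 α β => exact .ax4 α β
  | ax5 α β => exact .ax5 α β

/-- Compactness: derivations use only finitely many premises. -/
lemma deriv_compact {Γ : Set Form} {φ : Form} (h : Deriv Γ φ) :
    ∃ F : Set Form, F.Finite ∧ F ⊆ Γ ∧ Deriv F φ := by
  induction h with
  | @prem Γ φ h => exact ⟨{φ}, Set.finite_singleton _, by simpa using h, .prem rfl⟩
  | taut h => exact ⟨∅, Set.finite_empty, Set.empty_subset _, .taut h⟩
  | mp _ _ ih1 ih2 =>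
    obtain ⟨F1, hf1, hs1, hd1⟩ := ih1
    obtain ⟨F2, hf2, hs2, hd2⟩ := ih2
    exact ⟨F1 ∪ F2, hf1.union hf2, Set.union_subset hs1 hs2,
      .mp (deriv_mono hd1 Set.subset_union_left) (deriv_mono hd2 Set.subset_union_right)⟩
  | boxK φ ψ => exact ⟨∅, Set.finite_empty, Set.empty_subset _, .boxK φ ψ⟩
  | boxT φ => exact ⟨∅, Set.finite_empty, Set.empty_subset _, .boxT φ⟩
  | box5 φ => exact ⟨∅, Set.finite_empty, Set.empty_subset _, .box5 φ⟩
  | nec h => exact ⟨∅, Set.finite_empty, Set.empty_subset _, .nec h⟩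
  | ax1 => exact ⟨∅, Set.finite_empty, Set.empty_subset _, .ax1⟩
  | ax2 α => exact ⟨∅, Set.finite_empty, Set.empty_subset _, .ax2 α⟩
  | ax3 α => exact ⟨∅, Set.finite_empty, Set.empty_subset _, .ax3 α⟩
  | ax4 α β => exact ⟨∅, Set.finite_empty, Set.empty_subset _, .ax4 α β⟩
  | ax5 α β => exact ⟨∅, Set.finite_empty, Set.empty_subset _, .ax5 α β⟩

/-! Tautology schemas. -/

lemma taut_id (χ : Form) : Taut (χ.imp χ) := by
  intro v u
  simp only [Form.imp, Form.eval]
  cases χ.eval v u <;> rfl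

lemma taut_kk (φ χ : Form) : Taut (φ.imp (χ.imp φ)) := by
  intro v u
  simp only [Form.imp, Form.eval]
  cases φ.eval v u <;> cases χ.eval v u <;> rfl

lemma taut_s (χ φ ψ : Form) :
    Taut ((χ.imp (φ.imp ψ)).imp ((χ.imp φ).imp (χ.imp ψ))) := by
  intro v u
  simp only [Form.imp, Form.eval]
  cases χ.eval v u <;> cases φ.eval v u <;> cases ψ.eval v u <;> rfl

lemma taut_absurd (φ : Form) : Taut (φ.imp ((Form.neg φ).imp Form.bot)) := by
  intro v u
  simp only [Form.imp, Form.bot, Form.eval, CPL.eval]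
  cases φ.eval v u <;> rfl

lemma taut_negintro (φ : Form) : Taut ((φ.imp Form.bot).imp (Form.neg φ)) := by
  intro v u
  simp only [Form.imp, Form.bot, Form.eval, CPL.eval]
  cases φ.eval v u <;> rfl

lemma taut_dne (φ : Form) : Taut (((Form.neg φ).imp Form.bot).imp φ) := by
  intro v u
  simp only [Form.imp, Form.bot, Form.eval, CPL.eval]
  cases φ.eval v u <;> rfl

lemma taut_andi (X Y : Form) : Taut (X.imp (Y.imp (X.and Y))) := by
  intro v u
  simp only [Form.imp, Form.eval]
  cases X.eval v u <;> cases Y.eval v u <;> rfl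

lemma taut_andl (X Y : Form) : Taut ((X.and Y).imp X) := by
  intro v u
  simp only [Form.imp, Form.eval]
  cases X.eval v u <;> cases Y.eval v u <;> rfl

lemma taut_andr (X Y : Form) : Taut ((X.and Y).imp Y) := by
  intro v u
  simp only [Form.imp, Form.eval]
  cases X.eval v u <;> cases Y.eval v u <;> rfl

lemma taut_ifffst (X Y : Form) : Taut ((X.iff Y).imp (X.imp Y)) := by
  intro v u
  simp only [Form.imp, Form.iff, Form.eval]
  cases X.eval v u <;> cases Y.eval v u <;> rfl

lemma taut_trans (P Q R : Form) :
    Taut ((P.imp Q).imp ((Q.imp R).imp (P.imp R))) := by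
  intro v u
  simp only [Form.imp, Form.eval]
  cases P.eval v u <;> cases Q.eval v u <;> cases R.eval v u <;> rfl

lemma taut_comb (ψ₁ ψ₀ : CPL) (σ θ : Form) :
    Taut (((Form.of ψ₁).imp (σ.imp θ)).imp
      (((Form.of ψ₀).imp σ).imp ((Form.of (CPL.and ψ₁ ψ₀)).imp θ))) := by
  intro v u
  simp only [Form.imp, Form.eval, CPL.eval]
  cases ψ₁.eval v <;> cases ψ₀.eval v <;> cases σ.eval v u <;> cases θ.eval v u <;> rfl

/-- Weakening via the K-combinator. -/
lemma deriv_weak {Γ : Set Form} {φ ψ : Form} (h : Deriv Γ ψ) : Deriv Γ (φ.imp ψ) :=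
  .mp (.taut (taut_kk ψ φ)) h

/-- Transitivity of implication. -/
lemma deriv_trans {Γ : Set Form} {P Q R : Form}
    (h1 : Deriv Γ (P.imp Q)) (h2 : Deriv Γ (Q.imp R)) : Deriv Γ (P.imp R) :=
  .mp (.mp (.taut (taut_trans P Q R)) h1) h2

/-- The deduction theorem. -/
lemma deduction_aux {Γ' : Set Form} {φ : Form} (h : Deriv Γ' φ) :
    ∀ (χ : Form) (Γ : Set Form), Γ' = insert χ Γ → Deriv Γ (χ.imp φ) := by
  induction h with
  | @prem _ φ h =>
    intro χ Γ hE
    subst hE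
    rcases Set.mem_insert_iff.1 h with h | h
    · subst h; exact .taut (taut_id _)
    · exact deriv_weak (.prem h)
  | taut h => intro χ Γ _; exact deriv_weak (.taut h)
  | mp _ _ ih1 ih2 =>
    intro χ Γ hE
    exact .mp (.mp (.taut (taut_s _ _ _)) (ih1 χ Γ hE)) (ih2 χ Γ hE)
  | boxK φ ψ => intro χ Γ _; exact deriv_weak (.boxK φ ψ)
  | boxT φ => intro χ Γ _; exact deriv_weak (.boxT φ)
  | box5 φ => intro χ Γ _; exact deriv_weak (.box5 φ)
  | nec h => intro χ Γ _; exact deriv_weak (.nec h)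
  | ax1 => intro χ Γ _; exact deriv_weak .ax1
  | ax2 α => intro χ Γ _; exact deriv_weak (.ax2 α)
  | ax3 α => intro χ Γ _; exact deriv_weak (.ax3 α)
  | ax4 α β => intro χ Γ _; exact deriv_weak (.ax4 α β)
  | ax5 α β => intro χ Γ _; exact deriv_weak (.ax5 α β)

lemma deduction {Γ : Set Form} {χ φ : Form} (h : Deriv (insert χ Γ) φ) :
    Deriv Γ (χ.imp φ) := deduction_aux h χ Γ rfl

/-! MCS facts. -/

lemma mcs_closed {Γ : Set Form} {φ : Form} (hΓ : MCS Γ) (h : Deriv Γ φ) : φ ∈ Γ := by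
  have hcons : LogConsistent (insert φ Γ) := by
    intro hbot
    exact hΓ.1 (.mp (deduction hbot) h)
  have := hΓ.2 _ hcons (Set.subset_insert _ _)
  rw [← this]
  exact Set.mem_insert _ _

lemma mcs_mp {Γ : Set Form} {φ ψ : Form} (hΓ : MCS Γ)
    (h1 : φ.imp ψ ∈ Γ) (h2 : φ ∈ Γ) : ψ ∈ Γ :=
  mcs_closed hΓ (.mp (.prem h1) (.prem h2))

lemma mcs_not_both {Γ : Set Form} {φ : Form} (hΓ : MCS Γ)
    (h1 : φ ∈ Γ) (h2 : Form.neg φ ∈ Γ) : False :=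
  hΓ.1 (.mp (.mp (.taut (taut_absurd φ)) (.prem h1)) (.prem h2))

lemma mcs_and_intro {Γ : Set Form} {X Y : Form} (hΓ : MCS Γ)
    (h1 : X ∈ Γ) (h2 : Y ∈ Γ) : Form.and X Y ∈ Γ :=
  mcs_closed hΓ (.mp (.mp (.taut (taut_andi X Y)) (.prem h1)) (.prem h2))

lemma mcs_and_left {Γ : Set Form} {X Y : Form} (hΓ : MCS Γ)
    (h : Form.and X Y ∈ Γ) : X ∈ Γ :=
  mcs_closed hΓ (.mp (.taut (taut_andl X Y)) (.prem h))

lemma mcs_and_right {Γ : Set Form} {X Y : Form} (hΓ : MCS Γ)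
    (h : Form.and X Y ∈ Γ) : Y ∈ Γ :=
  mcs_closed hΓ (.mp (.taut (taut_andr X Y)) (.prem h))

/-! Lindenbaum's lemma. -/

lemma finite_subset_chain {c : Set (Set Form)} (hc : IsChain (· ⊆ ·) c)
    (hne : c.Nonempty) {F : Set Form} (hF : F.Finite) (hsub : F ⊆ ⋃₀ c) :
    ∃ T ∈ c, F ⊆ T := by
  classical
  have main : ∀ Fs : Finset Form, ↑Fs ⊆ ⋃₀ c → ∃ T ∈ c, ↑Fs ⊆ T := by
    intro Fs
    induction Fs using Finset.induction_on with
    | empty =>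
      intro _
      obtain ⟨T, hT⟩ := hne
      exact ⟨T, hT, by simp⟩
    | @insert a s ha ih =>
      intro hsub'
      rw [Finset.coe_insert] at hsub' ⊢
      obtain ⟨T, hT, hsT⟩ := ih (fun x hx => hsub' (Set.mem_insert_of_mem _ hx))
      obtain ⟨Ta, hTa, haTa⟩ := hsub' (Set.mem_insert _ _)
      rcases hc.total hTa hT with h | h
      · exact ⟨T, hT, Set.insert_subset (h haTa) hsT⟩
      · exact ⟨Ta, hTa, Set.insert_subset haTa (hsT.trans h)⟩
  obtain ⟨T, hT, hsT⟩ := main hF.toFinset (by rwa [Set.Finite.coe_toFinset])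
  rw [Set.Finite.coe_toFinset] at hsT
  exact ⟨T, hT, hsT⟩

lemma lindenbaum {S : Set Form} (h : LogConsistent S) :
    ∃ Γ, MCS Γ ∧ S ⊆ Γ := by
  set 𝒮 : Set (Set Form) := {T | LogConsistent T ∧ S ⊆ T} with h𝒮
  have hz := zorn_subset_nonempty 𝒮 ?_ S ⟨h, subset_rfl⟩
  · obtain ⟨m, hSm, hmax⟩ := hz
    refine ⟨m, ⟨hmax.1.1, ?_⟩, hSm⟩
    intro Δ hΔcons hmΔ
    have hΔ𝒮 : Δ ∈ 𝒮 := ⟨hΔcons, hSm.trans hmΔ⟩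
    exact le_antisymm (hmax.2 hΔ𝒮 hmΔ) hmΔ
  · intro c hc𝒮 hchain hne
    refine ⟨⋃₀ c, ⟨?_, ?_⟩, fun s hs => Set.subset_sUnion_of_mem hs⟩
    · intro hbot
      obtain ⟨F, hFfin, hFsub, hFd⟩ := deriv_compact hbot
      obtain ⟨T, hTc, hFT⟩ := finite_subset_chain hchain hne hFfin hFsub
      exact (hc𝒮 hTc).1 (deriv_mono hFd hFT)
    · obtain ⟨T, hT⟩ := hne
      exact (hc𝒮 hT).2.trans (Set.subset_sUnion_of_mem hT)

/-! S5 facts: the 4 axiom is derivable. -/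

lemma taut_four_a (φ : Form) :
    Taut (((Form.box (Form.neg (Form.box φ))).imp (Form.neg (Form.box φ))).imp
      ((Form.box φ).imp (Form.neg (Form.box (Form.neg (Form.box φ)))))) := by
  intro v u
  simp only [Form.imp, Form.eval]
  cases u (Form.box φ) <;> cases u (Form.box (Form.neg (Form.box φ))) <;> rfl

lemma taut_four_b (φ : Form) :
    Taut (((Form.neg (Form.box φ)).imp (Form.box (Form.neg (Form.box φ)))).imp
      ((Form.neg (Form.box (Form.neg (Form.box φ)))).imp (Form.box φ))) := by
  intro v u
  simp only [Form.imp, Form.eval]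
  cases u (Form.box φ) <;> cases u (Form.box (Form.neg (Form.box φ))) <;> rfl

lemma deriv_four (Γ : Set Form) (φ : Form) :
    Deriv Γ ((Form.box φ).imp (Form.box (Form.box φ))) := by
  set b := Form.box φ with hb
  have s1 : Deriv Γ (b.imp (Form.neg (Form.box (Form.neg b)))) :=
    .mp (.taut (taut_four_a φ)) (.boxT (Form.neg b))
  have s2 : Deriv Γ ((Form.neg (Form.box (Form.neg b))).imp
      (Form.box (Form.neg (Form.box (Form.neg b))))) := .box5 (Form.neg b)
  have s3 : Deriv (∅ : Set Form) ((Form.neg (Form.box (Form.neg b))).imp b) :=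
    .mp (.taut (taut_four_b φ)) (.box5 φ)
  have s4 : Deriv Γ ((Form.box (Form.neg (Form.box (Form.neg b)))).imp (Form.box b)) :=
    .mp (.boxK _ _) (.nec s3)
  exact deriv_trans s1 (deriv_trans s2 s4)

/-- Boxed modus ponens inside an MCS. -/
lemma mcs_box_mp {Γ : Set Form} {φ ψ : Form} (hΓ : MCS Γ)
    (h1 : Form.box (φ.imp ψ) ∈ Γ) (h2 : Form.box φ ∈ Γ) : Form.box ψ ∈ Γ :=
  mcs_closed hΓ (.mp (.mp (.boxK φ ψ) (.prem h1)) (.prem h2))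

/-- `Γ₀[⊞] ⊆ Δ` implies `Γ₀[⊞] ⊆ Δ[⊞]` (using the 4 axiom). -/
lemma boxSet_sub_boxSet {Γ₀ Δ : Set Form} (hΓ₀ : MCS Γ₀) (hsub : boxSet Γ₀ ⊆ Δ) :
    boxSet Γ₀ ⊆ boxSet Δ := by
  intro χ hχ
  have h4 : Form.box (Form.box χ) ∈ Γ₀ :=
    mcs_closed hΓ₀ (.mp (deriv_four Γ₀ χ) (.prem hχ))
  exact hsub h4

/-- `Δ[⊞] ⊆ Δ[I]` (using Ax1 and `⊤`). -/
lemma boxSet_sub_intSet {Δ : Set Form} (hΔ : MCS Δ) : boxSet Δ ⊆ intSet Δ := by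
  intro χ hχ
  refine ⟨CPL.top, mcs_and_intro hΔ (mcs_closed hΔ .ax1) ?_⟩
  have hnec : Deriv Δ (Form.box (χ.imp ((Form.of CPL.top).imp χ))) :=
    .nec (.taut (taut_kk χ (Form.of CPL.top)))
  exact mcs_box_mp hΔ (mcs_closed hΔ hnec) hχ

/-! Lists of implications. -/

/-- `impList [σ₁, …, σₙ] θ = σₙ → (… → (σ₁ → θ))` (folding from the left). -/
def impList : List Form → Form → Form
  | [], θ => θ
  | σ :: L, θ => impList L (σ.imp θ)

lemma deriv_impList : ∀ (L : List Form) (θ : Form),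
    Deriv {x | x ∈ L} θ → Deriv ∅ (impList L θ) := by
  intro L
  induction L with
  | nil =>
    intro θ h
    have : ({x | x ∈ ([] : List Form)} : Set Form) = ∅ := by ext x; simp
    simpa [impList, this] using h
  | cons σ L ih =>
    intro θ h
    have hset : ({x | x ∈ σ :: L} : Set Form) = insert σ {x | x ∈ L} := by
      ext x; simp
    rw [hset] at h
    exact ih (σ.imp θ) (deduction h)

/-- Key combination lemma: if all elements of `L` belong to `Δ[I]` and
`⊞(ψ → (σₙ → … → σ₁ → θ)) ∈ Δ` with `Iψ ∈ Δ`, then some `ψ'` witnesses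
`θ` itself. -/
lemma combine {Δ : Set Form} (hΔ : MCS Δ) :
    ∀ (L : List Form) (θ : Form) (ψ : CPL), (∀ σ ∈ L, σ ∈ intSet Δ) →
      Form.int ψ ∈ Δ → Form.box ((Form.of ψ).imp (impList L θ)) ∈ Δ →
      ∃ ψ' : CPL, Form.int ψ' ∈ Δ ∧ Form.box ((Form.of ψ').imp θ) ∈ Δ := by
  intro L
  induction L with
  | nil => intro θ ψ _ h1 h2; exact ⟨ψ, h1, h2⟩
  | cons σ L ih =>
    intro θ ψ hmem h1 h2
    obtain ⟨ψ₁, hψ₁, hbox₁⟩ :=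
      ih (σ.imp θ) ψ (fun τ hτ => hmem τ (List.mem_cons_of_mem _ hτ)) h1 h2
    obtain ⟨ψ₀, hσ⟩ := hmem σ List.mem_cons_self
    have hψ₀ : Form.int ψ₀ ∈ Δ := mcs_and_left hΔ hσ
    have hbox₀ : Form.box ((Form.of ψ₀).imp σ) ∈ Δ := mcs_and_right hΔ hσ
    refine ⟨CPL.and ψ₁ ψ₀, ?_, ?_⟩
    · -- `I(ψ₁ ∧ ψ₀) ∈ Δ` via Ax4
      have hiff : Deriv Δ ((Form.and (.int ψ₁) (.int ψ₀)).iff (Form.int (.and ψ₁ ψ₀))) :=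
        .ax4 ψ₁ ψ₀
      have : Deriv Δ (Form.int (.and ψ₁ ψ₀)) :=
        .mp (.mp (.taut (taut_ifffst _ _)) hiff)
          (.mp (.mp (.taut (taut_andi _ _)) (.prem hψ₁)) (.prem hψ₀))
      exact mcs_closed hΔ this
    · -- `⊞(ψ₁∧ψ₀ → θ) ∈ Δ`
      have hc : Deriv Δ (Form.box (((Form.of ψ₁).imp (σ.imp θ)).imp
          (((Form.of ψ₀).imp σ).imp ((Form.of (CPL.and ψ₁ ψ₀)).imp θ)))) :=
        .nec (.taut (taut_comb ψ₁ ψ₀ σ θ))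
      exact mcs_box_mp hΔ (mcs_box_mp hΔ (mcs_closed hΔ hc) hbox₁) hbox₀

end Aux

/-- Existence Lemma: Let `Γ₀` be maximally `Log`-consistent,
`Δ ∈ [Γ₀]_⊞` and `φ ∈ L_CPL`. If `¬Iφ ∈ Δ`, then either `Iφ̄ ∉ Δ` or there is
`Γ ∈ [Γ₀]_⊞` with `Δ R^c Γ` (i.e. `Δ[I] ⊆ Γ`) and `¬φ ∈ Γ`. -/
theorem existence_lemma (Γ₀ Δ : Set Form) (hΓ₀ : MCS Γ₀)
    (hΔ : Δ ∈ canonDomain Γ₀) (φ : CPL)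
    (h : Form.neg (Form.int φ) ∈ Δ) :
    Form.int φ.bar ∉ Δ ∨
      ∃ Γ ∈ canonDomain Γ₀, intSet Δ ⊆ Γ ∧ Form.neg (Form.of φ) ∈ Γ := by
  by_cases hbar : Form.int φ.bar ∈ Δ
  · right
    obtain ⟨hΔmcs, hΔbox⟩ := hΔ
    set S : Set Form := insert (Form.neg (Form.of φ)) (intSet Δ) with hS
    have hcons : LogConsistent S := by
      intro hbot
      obtain ⟨F, hFfin, hFsub, hFd⟩ := deriv_compact hbot
      set G : Set Form := F \ {Form.neg (Form.of φ)} with hG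
      have hGfin : G.Finite := hFfin.diff
      have hGsub : G ⊆ intSet Δ := by
        intro x hx
        rcases Set.mem_insert_iff.1 (hFsub hx.1) with h' | h'
        · exact absurd (h' ▸ Set.mem_singleton _) hx.2
        · exact h'
      have hFd' : Deriv (insert (Form.neg (Form.of φ)) G) Form.bot := by
        refine deriv_mono hFd ?_
        intro x hx
        by_cases hxe : x = Form.neg (Form.of φ)
        · exact hxe ▸ Set.mem_insert _ _
        · exact Set.mem_insert_of_mem _ ⟨hx, by simpa using hxe⟩
      have hder : Deriv G (Form.of φ) := .mp (.taut (taut_dne _)) (deduction hFd')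
      set L : List Form := hGfin.toFinset.toList with hLdef
      have hLmem : ∀ x, x ∈ L ↔ x ∈ G := by
        intro x; simp [hLdef, Set.Finite.mem_toFinset]
      have hsetEq : ({x | x ∈ L} : Set Form) = G := by
        ext x; exact hLmem x
      have h0 : Deriv ∅ (impList L (Form.of φ)) :=
        deriv_impList L _ (by rwa [hsetEq])
      have hint_top : Form.int CPL.top ∈ Δ := mcs_closed hΔmcs .ax1
      have hbox0 : Form.box ((Form.of CPL.top).imp (impList L (Form.of φ))) ∈ Δ :=
        mcs_closed hΔmcs (.nec (deriv_weak h0))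
      obtain ⟨ψ, hψ, hboxψ⟩ := combine hΔmcs L (Form.of φ) CPL.top
        (fun σ hσ => hGsub ((hLmem σ).1 hσ)) hint_top hbox0
      have hIφ : Deriv Δ (Form.int φ) :=
        .mp (.mp (.ax5 φ ψ) (.prem hboxψ))
          (.mp (.mp (.taut (taut_andi _ _)) (.prem hψ)) (.prem hbar))
      exact mcs_not_both hΔmcs (mcs_closed hΔmcs hIφ) h
    obtain ⟨Γ, hΓmcs, hSΓ⟩ := lindenbaum hcons
    refine ⟨Γ, ⟨hΓmcs, ?_⟩, ?_, ?_⟩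
    · exact fun x hx => hSΓ (Set.mem_insert_of_mem _
        (boxSet_sub_intSet hΔmcs (boxSet_sub_boxSet hΓ₀ hΔbox hx)))
    · exact fun x hx => hSΓ (Set.mem_insert_of_mem _ hx)
    · exact hSΓ (Set.mem_insert _ _)
  · exact Or.inl hbar
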